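/- For the equal-benefit case with frequencies proportional to 2^{-m} (f_m = 2^{-m}/(1 - 2^{-n}) for m = 1,...,n) and E = 1, the transition thresholds are κ_m = ln(2^m - m), and in particular κ_m/m → ln 2 as m → ∞ (linear growth in m despite exponential decay of frequencies). -/

import Mathlib

open Real Filter Finset

lemma mygeom_sum_inv (m : ℕ) : (∑ j ∈ Finset.Icc 1 m, ((2 : ℝ) ^ j)⁻¹) = 1 - ((2:ℝ)^m)⁻¹ := by
  induction m with
  | zero => simp
  | succ n ih =>
    rw [Finset.sum_Icc_succ_top (by omega), ih, pow_succ]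
    have : (2:ℝ)^n ≠ 0 := by positivity
    field_simp
    ring

lemma my_two_pow_pred_le (m : ℕ) (hm : 1 ≤ m) : (m:ℝ) ≤ (2:ℝ)^(m-1) := by
  have h : m ≤ 2^(m-1) := by
    have := @Nat.lt_two_pow_self (m-1)
    omega
  calc (m:ℝ) ≤ ((2^(m-1) : ℕ) : ℝ) := by exact_mod_cast h
    _ = (2:ℝ)^(m-1) := by push_cast; ring

lemma my_pow_split (m : ℕ) (hm : 1 ≤ m) : (2:ℝ)^(m-1) + (2:ℝ)^(m-1) = (2:ℝ)^m := by
  rw [← two_mul, ← pow_succ']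
  congr 1
  omega

theorem cascade_geometric (κ : ℕ → ℝ)
    (hκ : ∀ m, 1 ≤ m →
      κ m = Real.log ((∑ j ∈ Finset.Icc 1 m, ((2 : ℝ) ^ j)⁻¹) / ((2 : ℝ) ^ m)⁻¹ - (m - 1))) :
    (∀ m, 1 ≤ m → κ m = Real.log ((2 : ℝ) ^ m - m)) ∧
    Tendsto (fun m : ℕ => κ m / m) atTop (nhds (Real.log 2)) := by
  have key : ∀ m, 1 ≤ m → κ m = Real.log ((2 : ℝ) ^ m - m) := by
    intro m hm
    rw [hκ m hm, mygeom_sum_inv]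
    have h2 : ((2:ℝ)^m) ≠ 0 := by positivity
    congr 1
    field_simp
    ring
  refine ⟨key, ?_⟩
  have hlo : Tendsto (fun m : ℕ => ((m:ℝ)-1) * Real.log 2 / m) atTop (nhds (Real.log 2)) := by
    have h1 : Tendsto (fun m : ℕ => 1 - 1/(m:ℝ)) atTop (nhds 1) := by
      have := (tendsto_const_nhds (x := (1:ℝ)) (f := atTop (α := ℕ))).sub
        tendsto_one_div_atTop_nhds_zero_nat
      simpa using this
    have h2 : Tendsto (fun m : ℕ => (1 - 1/(m:ℝ)) * Real.log 2) atTop (nhds (Real.log 2)) := by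
      simpa using h1.mul_const (Real.log 2)
    apply h2.congr'
    filter_upwards [eventually_gt_atTop 0] with m hm
    have : (m:ℝ) ≠ 0 := by
      have : (0:ℝ) < m := by exact_mod_cast hm
      linarith
    field_simp
  have hhi : Tendsto (fun _ : ℕ => Real.log 2) atTop (nhds (Real.log 2)) := tendsto_const_nhds
  refine tendsto_of_tendsto_of_tendsto_of_le_of_le' hlo hhi ?_ ?_
  · filter_upwards [eventually_ge_atTop 1] with m hm
    rw [key m hm]
    have h1 : (2:ℝ)^(m-1) ≤ (2:ℝ)^m - m := by
      have := my_two_pow_pred_le m hm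
      have := my_pow_split m hm
      linarith
    have hpos : (0:ℝ) < (2:ℝ)^(m-1) := by positivity
    have hle : ((m-1 : ℕ):ℝ) * Real.log 2 ≤ Real.log ((2:ℝ)^m - m) := by
      have := Real.log_le_log hpos h1
      rwa [Real.log_pow] at this
    have hcast : ((m-1 : ℕ):ℝ) = (m:ℝ) - 1 := by
      push_cast [Nat.cast_sub hm]; ring
    rw [hcast] at hle
    have hm' : (0:ℝ) < m := by exact_mod_cast hm
    gcongr
  · filter_upwards [eventually_ge_atTop 1] with m hm
    rw [key m hm]
    have hm' : (0:ℝ) < m := by exact_mod_cast hm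
    rw [div_le_iff₀ hm']
    have h2 : (2:ℝ)^m - m ≤ (2:ℝ)^m := by
      have : (0:ℝ) ≤ m := le_of_lt hm'
      linarith
    have hpos : (0:ℝ) < (2:ℝ)^m - m := by
      have := my_two_pow_pred_le m hm
      have := my_pow_split m hm
      have hp : (0:ℝ) < (2:ℝ)^(m-1) := by positivity
      linarith
    calc Real.log ((2:ℝ)^m - m) ≤ Real.log ((2:ℝ)^m) := Real.log_le_log hpos h2
      _ = m * Real.log 2 := by rw [Real.log_pow]
      _ = Real.log 2 * m := by ring
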